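/- Let x, y, x', y' ∈ ℝ≥0 satisfy max(x, y) ≤ max(x', y') and x + y ≤ x' + y'. Let m : Fin n → ℝ≥0 be a multiset of values containing x and y, and let m' be the multiset obtained from m by replacing x, y with x', y'. Then for every k ∈ {1,...,n}, the sum of the k largest elements of m is at most the sum of the k largest elements of m'. -/

import Mathlib

/-- The `k`-centrum value of `f`: the largest possible sum of `f` over a subset of size `k`
(i.e. the sum of the `k` largest values of `f`). -/
noncomputable def kSum (n k : ℕ) (f : Fin n → ℝ) : ℝ :=
  sSup {x : ℝ | ∃ S : Finset (Fin n), S.card = k ∧ x = ∑ i ∈ S, f i}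

lemma kSum_bdd (n k : ℕ) (f : Fin n → ℝ) :
    BddAbove {x : ℝ | ∃ S : Finset (Fin n), S.card = k ∧ x = ∑ i ∈ S, f i} := by
  apply ((Set.finite_range (fun S : Finset (Fin n) => ∑ i ∈ S, f i)).bddAbove).mono
  rintro x ⟨S, _, rfl⟩
  exact ⟨S, rfl⟩

/-- Replacing two values `x, y` of a multiset by `x', y'` with larger sum and larger max
weakly increases the sum of the `k` largest elements, for every `k`. -/
theorem stmt_10 (n : ℕ) (m m' : Fin n → ℝ) (i j : Fin n) (hij : i ≠ j)
    (x y x' y' : ℝ)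
    (hm : ∀ l, 0 ≤ m l) (hm' : ∀ l, 0 ≤ m' l)
    (hmi : m i = x) (hmj : m j = y) (hmi' : m' i = x') (hmj' : m' j = y')
    (hrest : ∀ l, l ≠ i → l ≠ j → m' l = m l)
    (hmax : max x y ≤ max x' y') (hsum : x + y ≤ x' + y')
    (k : ℕ) (hk1 : 1 ≤ k) (hkn : k ≤ n) :
    kSum n k m ≤ kSum n k m' := by
  have hbdd := kSum_bdd n k m'
  apply csSup_le
  · obtain ⟨S, _, hcard⟩ := Finset.exists_subset_card_eq (s := (Finset.univ : Finset (Fin n))) (n := k)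
      (by simpa using hkn)
    exact ⟨_, S, hcard, rfl⟩
  rintro s ⟨S, hcard, rfl⟩
  set T := (S.erase i).erase j with hTdef
  have hiT : i ∉ T := fun h => (Finset.mem_erase.1 (Finset.mem_erase.1 h).2).1 rfl
  have hjT : j ∉ T := fun h => (Finset.mem_erase.1 h).1 rfl
  have hTm : ∑ l ∈ T, m' l = ∑ l ∈ T, m l := by
    refine Finset.sum_congr rfl fun l hl => ?_
    exact hrest l (Finset.mem_erase.1 (Finset.mem_erase.1 hl).2).1 (Finset.mem_erase.1 hl).1
  by_cases hi : i ∈ S <;> by_cases hj : j ∈ S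
  · -- both in S: use S itself
    have hjEi : j ∈ S.erase i := Finset.mem_erase.2 ⟨hij.symm, hj⟩
    have hS : S = insert i (insert j T) := by
      rw [hTdef, Finset.insert_erase hjEi, Finset.insert_erase hi]
    have hiIns : i ∉ insert j T := by simp [hij, hiT]
    calc ∑ l ∈ S, m l = m i + (m j + ∑ l ∈ T, m l) := by
          rw [hS, Finset.sum_insert hiIns, Finset.sum_insert hjT]
      _ ≤ m' i + (m' j + ∑ l ∈ T, m' l) := by
          rw [hmi, hmj, hmi', hmj', hTm]; linarith
      _ = ∑ l ∈ S, m' l := by rw [hS, Finset.sum_insert hiIns, Finset.sum_insert hjT]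
      _ ≤ _ := le_csSup hbdd ⟨S, hcard, rfl⟩
  · -- i ∈ S, j ∉ S
    have hT2 : T = S.erase i :=
      Finset.erase_eq_of_notMem (fun h => hj (Finset.mem_of_mem_erase h))
    have hS : S = insert i T := by rw [hT2, Finset.insert_erase hi]
    have hsumS : ∑ l ∈ S, m l = x + ∑ l ∈ T, m l := by
      rw [hS, Finset.sum_insert hiT, hmi]
    by_cases hxx : x ≤ x'
    · calc ∑ l ∈ S, m l = x + ∑ l ∈ T, m l := hsumS
        _ ≤ x' + ∑ l ∈ T, m' l := by rw [hTm]; linarith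
        _ = ∑ l ∈ S, m' l := by rw [hS, Finset.sum_insert hiT, hmi']
        _ ≤ _ := le_csSup hbdd ⟨S, hcard, rfl⟩
    · have hxy' : x ≤ y' := by
        have h1 : x ≤ max x' y' := (le_max_left x y).trans hmax
        rcases le_max_iff.1 h1 with h | h
        · linarith
        · exact h
      have hcard' : (insert j T).card = k := by
        rw [Finset.card_insert_of_notMem hjT, hT2, Finset.card_erase_of_mem hi, hcard]
        omega
      calc ∑ l ∈ S, m l = x + ∑ l ∈ T, m l := hsumS
        _ ≤ y' + ∑ l ∈ T, m' l := by rw [hTm]; linarith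
        _ = ∑ l ∈ insert j T, m' l := by rw [Finset.sum_insert hjT, hmj']
        _ ≤ _ := le_csSup hbdd ⟨insert j T, hcard', rfl⟩
  · -- j ∈ S, i ∉ S
    have hjEi : j ∈ S.erase i := Finset.mem_erase.2 ⟨hij.symm, hj⟩
    have hEi : S.erase i = S := Finset.erase_eq_of_notMem hi
    have hS : S = insert j T := by rw [hTdef, Finset.insert_erase hjEi, hEi]
    have hsumS : ∑ l ∈ S, m l = y + ∑ l ∈ T, m l := by
      rw [hS, Finset.sum_insert hjT, hmj]
    by_cases hyy : y ≤ y'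
    · calc ∑ l ∈ S, m l = y + ∑ l ∈ T, m l := hsumS
        _ ≤ y' + ∑ l ∈ T, m' l := by rw [hTm]; linarith
        _ = ∑ l ∈ S, m' l := by rw [hS, Finset.sum_insert hjT, hmj']
        _ ≤ _ := le_csSup hbdd ⟨S, hcard, rfl⟩
    · have hyx' : y ≤ x' := by
        have h1 : y ≤ max x' y' := (le_max_right x y).trans hmax
        rcases le_max_iff.1 h1 with h | h
        · exact h
        · linarith
      have hcard' : (insert i T).card = k := by
        rw [Finset.card_insert_of_notMem hiT, hTdef, hEi, Finset.card_erase_of_mem hj, hcard]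
        omega
      calc ∑ l ∈ S, m l = y + ∑ l ∈ T, m l := hsumS
        _ ≤ x' + ∑ l ∈ T, m' l := by rw [hTm]; linarith
        _ = ∑ l ∈ insert i T, m' l := by rw [Finset.sum_insert hiT, hmi']
        _ ≤ _ := le_csSup hbdd ⟨insert i T, hcard', rfl⟩
  · -- neither
    have hT2 : T = S := by
      rw [hTdef, Finset.erase_eq_of_notMem hi, Finset.erase_eq_of_notMem hj]
    have : ∑ l ∈ S, m l = ∑ l ∈ S, m' l := by rw [← hT2, hTm]
    rw [this]
    exact le_csSup hbdd ⟨S, hcard, rfl⟩
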